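/- Let 0 < γ < 1 and T_b ∈ (0, ∞]. Suppose f : ℝ → ℝ is nondecreasing, Lipschitz on every bounded interval, and satisfies f(0) ≥ 0. Let v : [0, T_b) → ℝ be a continuous function with v(0) ≥ 0 satisfying v(t) = v(0) + (1/Γ(γ)) ∫_0^t (t−s)^{γ−1} f(v(s)) ds for all t ∈ [0, T_b). Then v is nondecreasing on [0, T_b); in particular v(t) ≥ v(0) ≥ 0 for all t ∈ [0, T_b). -/

import Mathlib

open MeasureTheory Set
open scoped ENNReal

open intervalIntegral in
lemma ker_ii (γ : ℝ) (hγ0 : 0 < γ) (t a b : ℝ) :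
    IntervalIntegrable (fun s => (t - s) ^ (γ - 1)) volume a b := by
  have h := (intervalIntegrable_rpow' (a := t - a) (b := t - b) (r := γ - 1)
    (by linarith)).comp_sub_left t
  simpa using h

lemma ker_int (γ : ℝ) (hγ0 : 0 < γ) (a t : ℝ) :
    ∫ s in a..t, (t - s) ^ (γ - 1) = (t - a) ^ γ / γ := by
  rw [intervalIntegral.integral_comp_sub_left (fun x => x ^ (γ - 1)) t]
  rw [integral_rpow (Or.inl (by linarith))]
  simp [sub_self, Real.zero_rpow (by positivity : γ ≠ 0)]

/-- Singular Gronwall: if `u ≥ 0` continuous on `[0,T]` and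
`u t ≤ C ∫_0^t (t-s)^(γ-1) u s ds`, then `u = 0` on `[0,T]`. -/
lemma gronwall (γ : ℝ) (hγ0 : 0 < γ) (C T : ℝ) (hC : 0 < C)
    (u : ℝ → ℝ) (hu : ContinuousOn u (Icc 0 T))
    (hnn : ∀ t ∈ Icc (0:ℝ) T, 0 ≤ u t)
    (hle : ∀ t ∈ Icc (0:ℝ) T, u t ≤ C * ∫ s in (0:ℝ)..t, (t - s) ^ (γ - 1) * u s) :
    ∀ t ∈ Icc (0:ℝ) T, u t = 0 := by
  -- choose δ with C * δ^γ / γ ≤ 1/2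
  obtain ⟨δ, hδ0, hδ⟩ : ∃ δ > (0:ℝ), C * (δ ^ γ / γ) ≤ 1 / 2 := by
    refine ⟨(γ / (2 * C)) ^ (1 / γ), by positivity, ?_⟩
    rw [one_div, Real.rpow_inv_rpow (by positivity) (ne_of_gt hγ0)]
    rw [div_div_cancel_left' (ne_of_gt hγ0)]
    rw [mul_comm 2 C, mul_inv, ← mul_assoc, mul_inv_cancel₀ (ne_of_gt hC), one_mul]
    norm_num
  -- main induction
  have key : ∀ n : ℕ, ∀ t ∈ Icc (0:ℝ) T, t ≤ n * δ → u t = 0 := by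
    intro n
    induction n with
    | zero =>
      intro t ht ht0
      have h0 : t = 0 := le_antisymm (by simpa using ht0) ht.1
      subst h0
      have := hle 0 ht
      simp only [intervalIntegral.integral_same, mul_zero] at this
      exact le_antisymm this (hnn 0 ht)
    | succ n ih =>
      intro t ht htn
      push_cast at htn
      by_cases hta : t ≤ n * δ
      · exact ih t ht hta
      push_neg at hta
      set a : ℝ := n * δ with ha
      have ha0 : 0 ≤ a := by positivity
      set b : ℝ := min ((n+1) * δ) T with hb
      have hbT : b ≤ T := min_le_right _ _
      have hb0 : 0 ≤ b := le_min (by positivity) (le_trans ht.1 ht.2)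
      -- max of u on [0, b]
      obtain ⟨t', ht', hmax⟩ := (isCompact_Icc (a := (0:ℝ)) (b := b)).exists_isMaxOn
        (nonempty_Icc.2 hb0) (hu.mono (Icc_subset_Icc le_rfl hbT))
      set M := u t' with hM
      have hM0 : 0 ≤ M := hnn t' ⟨ht'.1, le_trans ht'.2 hbT⟩
      have hMz : M = 0 := by
        by_cases hta' : t' ≤ a
        · exact ih t' ⟨ht'.1, le_trans ht'.2 hbT⟩ hta'
        push_neg at hta'
        have ht'T : t' ≤ T := le_trans ht'.2 hbT
        have ht'mem : t' ∈ Icc (0:ℝ) T := ⟨ht'.1, ht'T⟩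
        -- integrability
        have hiu : IntervalIntegrable (fun s => (t' - s) ^ (γ - 1) * u s) volume 0 t' := by
          apply (ker_ii γ hγ0 t' 0 t').mul_continuousOn
          apply hu.mono
          rw [uIcc_of_le ht'.1]
          exact Icc_subset_Icc le_rfl ht'T
        have hiu1 : IntervalIntegrable (fun s => (t' - s) ^ (γ - 1) * u s) volume 0 a :=
          hiu.mono_set (by rw [uIcc_of_le ht'.1, uIcc_of_le ha0]; exact Icc_subset_Icc le_rfl hta'.le)
        have hiu2 : IntervalIntegrable (fun s => (t' - s) ^ (γ - 1) * u s) volume a t' :=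
          hiu.mono_set (by rw [uIcc_of_le ht'.1, uIcc_of_le hta'.le]; exact Icc_subset_Icc ha0 le_rfl)
        -- the integral over [0,a] vanishes
        have hzero : (∫ s in (0:ℝ)..a, (t' - s) ^ (γ - 1) * u s) = 0 := by
          have heq : (∫ s in (0:ℝ)..a, (t' - s) ^ (γ - 1) * u s)
              = ∫ _s in (0:ℝ)..a, (0:ℝ) := by
            apply intervalIntegral.integral_congr
            intro s hs
            rw [uIcc_of_le ha0] at hs
            have : u s = 0 := ih s ⟨hs.1, le_trans hs.2 (le_trans hta'.le ht'T)⟩ hs.2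
            simp [this]
          simpa using heq
        -- bound the integral over [a, t']
        have hker : IntervalIntegrable (fun s => (t' - s) ^ (γ - 1) * M) volume a t' :=
          (ker_ii γ hγ0 t' a t').mul_const M
        have hbound : (∫ s in a..t', (t' - s) ^ (γ - 1) * u s)
            ≤ ∫ s in a..t', (t' - s) ^ (γ - 1) * M := by
          apply intervalIntegral.integral_mono_on hta'.le hiu2 hker
          intro s hs
          have hker0 : (0:ℝ) ≤ (t' - s) ^ (γ - 1) := Real.rpow_nonneg (by linarith [hs.2]) _
          exact mul_le_mul_of_nonneg_left (hmax ⟨le_trans ha0 hs.1, le_trans hs.2 ht'.2⟩) hker0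
        have hval : (∫ s in a..t', (t' - s) ^ (γ - 1) * M) = (t' - a) ^ γ / γ * M := by
          rw [intervalIntegral.integral_mul_const, ker_int γ hγ0]
        have hsplit : (∫ s in (0:ℝ)..t', (t' - s) ^ (γ - 1) * u s)
            = (∫ s in (0:ℝ)..a, (t' - s) ^ (γ - 1) * u s)
              + ∫ s in a..t', (t' - s) ^ (γ - 1) * u s :=
          (intervalIntegral.integral_add_adjacent_intervals hiu1 hiu2).symm
        have hta2 : t' - a ≤ δ := by
          have h5 : t' ≤ (n+1) * δ := le_trans ht'.2 (min_le_left _ _)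
          have ha' : a = n * δ := rfl
          nlinarith [h5]
        have hpow : (t' - a) ^ γ ≤ δ ^ γ :=
          Real.rpow_le_rpow (by linarith) hta2 hγ0.le
        have : M ≤ C * ((t' - a) ^ γ / γ * M) := by
          calc M = u t' := rfl
            _ ≤ C * ∫ s in (0:ℝ)..t', (t' - s) ^ (γ - 1) * u s := hle t' ht'mem
            _ ≤ C * ((t' - a) ^ γ / γ * M) := by
                rw [hsplit, hzero, zero_add]
                exact mul_le_mul_of_nonneg_left (hbound.trans_eq hval) hC.le
        have hKD : (t' - a) ^ γ / γ ≤ δ ^ γ / γ := by gcongr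
        have step : C * ((t' - a) ^ γ / γ * M) ≤ C * (δ ^ γ / γ) * M := by
          rw [← mul_assoc]
          exact mul_le_mul_of_nonneg_right (mul_le_mul_of_nonneg_left hKD hC.le) hM0
        have h6 : C * (δ ^ γ / γ) * M ≤ 1 / 2 * M :=
          mul_le_mul_of_nonneg_right hδ hM0
        have h7 : M ≤ 1 / 2 * M := this.trans (step.trans h6)
        linarith
      -- conclude
      have : u t ≤ M := hmax ⟨ht.1, le_min (by push_cast; linarith) ht.2⟩
      have := hnn t ht
      linarith [hMz ▸ ‹u t ≤ M›]
  intro t ht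
  obtain ⟨n, hn⟩ := exists_nat_ge (t / δ)
  exact key n t ht (by rw [div_le_iff₀ hδ0] at hn; linarith)

lemma cont_of_liplocal (f : ℝ → ℝ)
    (hflip : ∀ M > (0:ℝ), ∃ L > (0:ℝ), ∀ x ∈ Icc (-M) M, ∀ y ∈ Icc (-M) M,
      |f x - f y| ≤ L * |x - y|) : Continuous f := by
  rw [continuous_iff_continuousAt]
  intro x
  obtain ⟨L, hL, hLip⟩ := hflip (|x| + 1) (by positivity)
  have hlip : LipschitzOnWith (Real.toNNReal L) f (Icc (-(|x|+1)) (|x|+1)) := by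
    rw [lipschitzOnWith_iff_dist_le_mul]
    intro a ha b hb
    rw [Real.dist_eq, Real.dist_eq]
    calc |f a - f b| ≤ L * |a - b| := hLip a ha b hb
      _ ≤ Real.toNNReal L * |a - b| := by
          apply mul_le_mul_of_nonneg_right _ (abs_nonneg _)
          exact (Real.le_coe_toNNReal L)
  apply hlip.continuousOn.continuousAt
  apply Icc_mem_nhds
  · nlinarith [neg_abs_le x]
  · nlinarith [le_abs_self x]

/-- Monotonicity of solutions of `D_c^γ v = f(v)`: for `0 < γ < 1`, `T_b ∈ (0,∞]`,
`f : ℝ → ℝ` nondecreasing, Lipschitz on every bounded interval, with `f(0) ≥ 0`;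
if `v` is continuous on `[0,T_b)` with `v(0) ≥ 0` and satisfies the Volterra equation
`v(t) = v(0) + (1/Γ(γ)) ∫_0^t (t−s)^{γ−1} f(v(s)) ds` on `[0,T_b)`, then `v` is
nondecreasing on `[0,T_b)`; in particular `v(t) ≥ v(0) ≥ 0` there. -/
theorem fode_monotone_solution
    (γ : ℝ) (hγ0 : 0 < γ) (hγ1 : γ < 1) (Tb : ℝ≥0∞) (hTb : 0 < Tb)
    (f : ℝ → ℝ)
    (hfmono : Monotone f)
    (hflip : ∀ M > (0:ℝ), ∃ L > (0:ℝ), ∀ x ∈ Icc (-M) M, ∀ y ∈ Icc (-M) M,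
      |f x - f y| ≤ L * |x - y|)
    (hf0 : 0 ≤ f 0)
    (v : ℝ → ℝ)
    (hvc : ContinuousOn v {t : ℝ | 0 ≤ t ∧ ENNReal.ofReal t < Tb})
    (hv0 : 0 ≤ v 0)
    (hv : ∀ t : ℝ, 0 ≤ t → ENNReal.ofReal t < Tb →
      v t = v 0 + (1 / Real.Gamma γ) *
        ∫ s in (0:ℝ)..t, (t - s) ^ (γ - 1) * f (v s)) :
    MonotoneOn v {t : ℝ | 0 ≤ t ∧ ENNReal.ofReal t < Tb} ∧
    ∀ t : ℝ, 0 ≤ t → ENNReal.ofReal t < Tb → v 0 ≤ v t := by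
  have hf_cont : Continuous f := cont_of_liplocal f hflip
  have h0S : (0:ℝ) ∈ {t : ℝ | 0 ≤ t ∧ ENNReal.ofReal t < Tb} := by
    refine ⟨le_refl 0, ?_⟩
    simpa using hTb
  suffices hmono : MonotoneOn v {t : ℝ | 0 ≤ t ∧ ENNReal.ofReal t < Tb} by
    exact ⟨hmono, fun t ht hlt => hmono h0S ⟨ht, hlt⟩ ht⟩
  intro t₁ h₁ t₂ h₂ h12
  -- setup on the compact interval [0, t₂]
  have ht₂0 : 0 ≤ t₂ := h₂.1
  have ht₁0 : 0 ≤ t₁ := h₁.1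
  have hsub : Icc 0 t₂ ⊆ {t : ℝ | 0 ≤ t ∧ ENNReal.ofReal t < Tb} := by
    intro s hs
    exact ⟨hs.1, lt_of_le_of_lt (ENNReal.ofReal_le_ofReal hs.2) h₂.2⟩
  have hvcont : ContinuousOn v (Icc 0 t₂) := hvc.mono hsub
  obtain ⟨M0, hM0⟩ := isCompact_Icc.exists_bound_of_continuousOn hvcont
  set M : ℝ := |M0| + 1 with hMdef
  have hMpos : 0 < M := by positivity
  have hvM : ∀ x ∈ Icc (0:ℝ) t₂, v x ∈ Icc (-M) M := by
    intro x hx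
    have := hM0 x hx
    rw [Real.norm_eq_abs] at this
    have h1 : |v x| ≤ M := le_trans this (by rw [hMdef]; nlinarith [le_abs_self M0])
    exact ⟨(abs_le.mp h1).1, (abs_le.mp h1).2⟩
  obtain ⟨L, hL, hLip⟩ := hflip M hMpos
  set c : ℝ := 1 / Real.Gamma γ with hcdef
  have hc : 0 < c := one_div_pos.mpr (Real.Gamma_pos_of_pos hγ0)
  set C : ℝ := c * L with hCdef
  have hC : 0 < C := mul_pos hc hL
  -- generic integrability of kernel × continuous function
  have hii : ∀ (t a b : ℝ) (w : ℝ → ℝ), ContinuousOn w (uIcc a b) →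
      IntervalIntegrable (fun s => (t - s) ^ (γ - 1) * w s) volume a b := by
    intro t a b w hw
    exact (ker_ii γ hγ0 t a b).mul_continuousOn hw
  have hgcont : ContinuousOn (fun s => f (v s)) (Icc 0 t₂) :=
    hf_cont.comp_continuousOn hvcont
  -- Step A : v is nonnegative on [0, t₂]
  have hvnn : ∀ s ∈ Icc (0:ℝ) t₂, 0 ≤ v s := by
    set u0 : ℝ → ℝ := fun s => max (-v s) 0 with hu0def
    have hu0cont : ContinuousOn u0 (Icc 0 t₂) :=
      (continuous_id.neg.max continuous_const).comp_continuousOn hvcont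
    have hu0nn : ∀ s ∈ Icc (0:ℝ) t₂, 0 ≤ u0 s := fun s _ => le_max_right _ _
    have hu0M : ∀ s ∈ Icc (0:ℝ) t₂, -u0 s ∈ Icc (-M) M := by
      intro s hs
      have h3 := hvM s hs
      constructor
      · simp only [hu0def, neg_le_neg_iff, max_le_iff]
        constructor
        · linarith [h3.1]
        · exact hMpos.le
      · have : 0 ≤ u0 s := hu0nn s hs
        linarith
    have hkey : ∀ t ∈ Icc (0:ℝ) t₂, u0 t ≤ C * ∫ s in (0:ℝ)..t, (t - s) ^ (γ - 1) * u0 s := by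
      intro t ht
      have hIcc_t : Icc (0:ℝ) t ⊆ Icc (0:ℝ) t₂ := Icc_subset_Icc le_rfl ht.2
      have huI : uIcc (0:ℝ) t ⊆ Icc (0:ℝ) t₂ := by
        rw [uIcc_of_le ht.1]; exact hIcc_t
      have hveq := hv t ht.1 (hsub ht).2
      -- pointwise lower bound for the integrand
      have hpt : ∀ s ∈ Icc (0:ℝ) t,
          (t - s) ^ (γ - 1) * (-(L * u0 s)) ≤ (t - s) ^ (γ - 1) * f (v s) := by
        intro s hs
        have hker0 : (0:ℝ) ≤ (t - s) ^ (γ - 1) := Real.rpow_nonneg (by linarith [hs.2]) _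
        have hfb : -(L * u0 s) ≤ f (v s) := by
          rcases le_or_gt 0 (v s) with hpos | hneg
          · have h4 : 0 ≤ f (v s) := le_trans hf0 (hfmono hpos)
            have h5 : 0 ≤ L * u0 s := mul_nonneg hL.le (hu0nn s (hIcc_t hs))
            linarith
          · have hu0v : u0 s = -v s := by
              simp only [hu0def, max_eq_left_iff]
              linarith
            have h6 := hLip 0 ⟨by linarith, hMpos.le⟩ (v s) (hvM s (hIcc_t hs))
            rw [abs_of_nonneg (by linarith : (0:ℝ) ≤ 0 - v s)] at h6
            have h8 : f 0 - f (v s) ≤ L * (-v s) := by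
              have h7 := le_trans (le_abs_self (f 0 - f (v s))) h6
              nlinarith
            rw [hu0v]
            linarith
        exact mul_le_mul_of_nonneg_left hfb hker0
      have hint1 : IntervalIntegrable (fun s => (t - s) ^ (γ - 1) * (-(L * u0 s))) volume 0 t :=
        hii t 0 t _ (((hu0cont.mono huI).const_smul L).neg)
      have hint2 : IntervalIntegrable (fun s => (t - s) ^ (γ - 1) * f (v s)) volume 0 t :=
        hii t 0 t _ (hgcont.mono huI)
      have hmono_int : (∫ s in (0:ℝ)..t, (t - s) ^ (γ - 1) * (-(L * u0 s)))
          ≤ ∫ s in (0:ℝ)..t, (t - s) ^ (γ - 1) * f (v s) :=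
        intervalIntegral.integral_mono_on ht.1 hint1 hint2 hpt
      have hfactor : (∫ s in (0:ℝ)..t, (t - s) ^ (γ - 1) * (-(L * u0 s)))
          = -(L * ∫ s in (0:ℝ)..t, (t - s) ^ (γ - 1) * u0 s) := by
        have hfun : (∫ s in (0:ℝ)..t, (t - s) ^ (γ - 1) * (-(L * u0 s)))
            = ∫ s in (0:ℝ)..t, (-L) * ((t - s) ^ (γ - 1) * u0 s) := by
          apply intervalIntegral.integral_congr
          intro s _
          ring
        rw [hfun, intervalIntegral.integral_const_mul]
        ring
      have hInn : 0 ≤ ∫ s in (0:ℝ)..t, (t - s) ^ (γ - 1) * u0 s := by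
        apply intervalIntegral.integral_nonneg ht.1
        intro s hs
        exact mul_nonneg (Real.rpow_nonneg (by linarith [hs.2]) _) (hu0nn s (hIcc_t hs))
      have hvlow : -(v t) ≤ C * ∫ s in (0:ℝ)..t, (t - s) ^ (γ - 1) * u0 s := by
        rw [hveq]
        rw [hfactor] at hmono_int
        have h9 : c * (-(L * ∫ s in (0:ℝ)..t, (t - s) ^ (γ - 1) * u0 s))
            ≤ c * ∫ s in (0:ℝ)..t, (t - s) ^ (γ - 1) * f (v s) :=
          mul_le_mul_of_nonneg_left hmono_int hc.le
        rw [hCdef]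
        nlinarith [h9, hv0]
      exact max_le hvlow (mul_nonneg hC.le hInn)
    have := gronwall γ hγ0 C t₂ hC u0 hu0cont hu0nn hkey
    intro s hs
    have h10 := this s hs
    have h11 : -v s ≤ u0 s := le_max_left _ _
    rw [h10] at h11
    linarith
  -- Step B : monotonicity via shifted comparison
  set d : ℝ := t₂ - t₁ with hddef
  have hd : 0 ≤ d := by simp only [hddef]; linarith
  have hdt₂ : d ≤ t₂ := by simp only [hddef]; linarith
  have hIcc1 : Icc (0:ℝ) t₁ ⊆ Icc 0 t₂ := Icc_subset_Icc le_rfl h12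
  have hmapsto : MapsTo (fun s => s + d) (Icc (0:ℝ) t₁) (Icc (0:ℝ) t₂) := by
    intro s hs
    simp only [mem_Icc] at hs ⊢
    constructor
    · linarith [hs.1]
    · have hd2 : d = t₂ - t₁ := hddef
      linarith [hs.2]
  have hvshift : ContinuousOn (fun s => v (s + d)) (Icc 0 t₁) := by
    have := hvcont.comp ((continuous_id.add continuous_const).continuousOn) hmapsto
    exact this
  set u : ℝ → ℝ := fun s => max (v s - v (s + d)) 0 with hudef
  have hucont : ContinuousOn u (Icc 0 t₁) :=
    (continuous_id.max continuous_const).comp_continuousOn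
      ((hvcont.mono hIcc1).sub hvshift)
  have hunn : ∀ s ∈ Icc (0:ℝ) t₁, 0 ≤ u s := fun s _ => le_max_right _ _
  have hkey : ∀ t ∈ Icc (0:ℝ) t₁, u t ≤ C * ∫ s in (0:ℝ)..t, (t - s) ^ (γ - 1) * u s := by
    intro t ht
    have htt₂ : t ∈ Icc (0:ℝ) t₂ := hIcc1 ht
    have htd : t + d ∈ Icc (0:ℝ) t₂ := hmapsto ht
    have h1 := hv t ht.1 (hsub htt₂).2
    have h2 := hv (t + d) htd.1 (hsub htd).2
    have huI_t : uIcc (0:ℝ) t ⊆ Icc 0 t₂ := by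
      rw [uIcc_of_le ht.1]
      exact Icc_subset_Icc le_rfl htt₂.2
    have huI_t1 : uIcc (0:ℝ) t ⊆ Icc 0 t₁ := by
      rw [uIcc_of_le ht.1]
      exact Icc_subset_Icc le_rfl ht.2
    -- integrability
    have hA : IntervalIntegrable (fun s => (t + d - s) ^ (γ - 1) * f (v s)) volume 0 d := by
      apply hii
      apply hgcont.mono
      rw [uIcc_of_le hd]
      exact Icc_subset_Icc le_rfl hdt₂
    have hB : IntervalIntegrable (fun s => (t + d - s) ^ (γ - 1) * f (v s)) volume d (t + d) := by
      apply hii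
      apply hgcont.mono
      rw [uIcc_of_le (by linarith [ht.1] : d ≤ t + d)]
      exact Icc_subset_Icc hd htd.2
    have hgshift : ContinuousOn (fun s => f (v (s + d))) (Icc 0 t₁) :=
      hf_cont.comp_continuousOn hvshift
    have hint2 : IntervalIntegrable (fun s => (t - s) ^ (γ - 1) * f (v (s + d))) volume 0 t :=
      hii t 0 t _ (hgshift.mono huI_t1)
    have hint3 : IntervalIntegrable (fun s => (t - s) ^ (γ - 1) * f (v s)) volume 0 t :=
      hii t 0 t _ (hgcont.mono huI_t)
    have hint4 : IntervalIntegrable (fun s => (t - s) ^ (γ - 1) * (-(L * u s))) volume 0 t :=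
      hii t 0 t _ (((hucont.mono huI_t1).const_smul L).neg)
    -- splitting the long integral
    have hsplit : (∫ s in (0:ℝ)..(t + d), (t + d - s) ^ (γ - 1) * f (v s))
        = (∫ s in (0:ℝ)..d, (t + d - s) ^ (γ - 1) * f (v s))
          + ∫ s in d..(t + d), (t + d - s) ^ (γ - 1) * f (v s) :=
      (intervalIntegral.integral_add_adjacent_intervals hA hB).symm
    -- change of variables in the second piece
    have hshift : (∫ s in d..(t + d), (t + d - s) ^ (γ - 1) * f (v s))
        = ∫ s in (0:ℝ)..t, (t - s) ^ (γ - 1) * f (v (s + d)) := by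
      have hcv := intervalIntegral.integral_comp_add_right (a := (0:ℝ)) (b := t)
        (fun x => (t + d - x) ^ (γ - 1) * f (v x)) d
      simp only [add_sub_add_right_eq_sub, zero_add] at hcv
      exact hcv.symm
    -- the first piece is nonnegative
    have hAnn : 0 ≤ ∫ s in (0:ℝ)..d, (t + d - s) ^ (γ - 1) * f (v s) := by
      apply intervalIntegral.integral_nonneg hd
      intro s hs
      have hsmem : s ∈ Icc (0:ℝ) t₂ := ⟨hs.1, le_trans hs.2 hdt₂⟩
      have hker0 : (0:ℝ) ≤ (t + d - s) ^ (γ - 1) :=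
        Real.rpow_nonneg (by linarith [hs.2, ht.1]) _
      have hfv : 0 ≤ f (v s) := le_trans hf0 (hfmono (hvnn s hsmem))
      exact mul_nonneg hker0 hfv
    -- pointwise estimate for the difference piece
    have hpt : ∀ s ∈ Icc (0:ℝ) t,
        (t - s) ^ (γ - 1) * (-(L * u s))
          ≤ (t - s) ^ (γ - 1) * f (v (s + d)) - (t - s) ^ (γ - 1) * f (v s) := by
      intro s hs
      have hs1 : s ∈ Icc (0:ℝ) t₁ := huI_t1 (by rw [uIcc_of_le ht.1]; exact hs)
      have hsd : s + d ∈ Icc (0:ℝ) t₂ := hmapsto hs1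
      have hker0 : (0:ℝ) ≤ (t - s) ^ (γ - 1) := Real.rpow_nonneg (by linarith [hs.2]) _
      have hdiff : -(L * u s) ≤ f (v (s + d)) - f (v s) := by
        rcases le_or_gt (v s) (v (s + d)) with hle' | hgt
        · have h5 : f (v s) ≤ f (v (s + d)) := hfmono hle'
          have h6 : 0 ≤ L * u s := mul_nonneg hL.le (hunn s hs1)
          linarith
        · have hus : u s = v s - v (s + d) := by
            simp only [hudef, max_eq_left_iff]
            linarith
          have h7 := hLip (v (s + d)) (hvM _ hsd) (v s) (hvM s (hIcc1 hs1))
          have h8 : f (v s) - f (v (s + d)) ≤ L * |v (s + d) - v s| := by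
            calc f (v s) - f (v (s + d)) ≤ |f (v s) - f (v (s + d))| := le_abs_self _
              _ = |f (v (s + d)) - f (v s)| := abs_sub_comm _ _
              _ ≤ L * |v (s + d) - v s| := h7
          rw [abs_of_nonpos (by linarith : v (s + d) - v s ≤ 0)] at h8
          rw [hus]
          linarith
      nlinarith [mul_le_mul_of_nonneg_left hdiff hker0]
    have hmono_int : (∫ s in (0:ℝ)..t, (t - s) ^ (γ - 1) * (-(L * u s)))
        ≤ ∫ s in (0:ℝ)..t,
            ((t - s) ^ (γ - 1) * f (v (s + d)) - (t - s) ^ (γ - 1) * f (v s)) :=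
      intervalIntegral.integral_mono_on ht.1 hint4 (hint2.sub hint3) hpt
    have hfactor : (∫ s in (0:ℝ)..t, (t - s) ^ (γ - 1) * (-(L * u s)))
        = -(L * ∫ s in (0:ℝ)..t, (t - s) ^ (γ - 1) * u s) := by
      have hfun : (∫ s in (0:ℝ)..t, (t - s) ^ (γ - 1) * (-(L * u s)))
          = ∫ s in (0:ℝ)..t, (-L) * ((t - s) ^ (γ - 1) * u s) := by
        apply intervalIntegral.integral_congr
        intro s _
        ring
      rw [hfun, intervalIntegral.integral_const_mul]
      ring
    have hdiff_int : (∫ s in (0:ℝ)..t,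
          ((t - s) ^ (γ - 1) * f (v (s + d)) - (t - s) ^ (γ - 1) * f (v s)))
        = (∫ s in (0:ℝ)..t, (t - s) ^ (γ - 1) * f (v (s + d)))
          - ∫ s in (0:ℝ)..t, (t - s) ^ (γ - 1) * f (v s) :=
      intervalIntegral.integral_sub hint2 hint3
    have hInn : 0 ≤ ∫ s in (0:ℝ)..t, (t - s) ^ (γ - 1) * u s := by
      apply intervalIntegral.integral_nonneg ht.1
      intro s hs
      have hs1 : s ∈ Icc (0:ℝ) t₁ := ⟨hs.1, le_trans hs.2 ht.2⟩
      exact mul_nonneg (Real.rpow_nonneg (by linarith [hs.2]) _) (hunn s hs1)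
    -- assemble
    have hmain : v t - v (t + d) ≤ C * ∫ s in (0:ℝ)..t, (t - s) ^ (γ - 1) * u s := by
      have hcomb : v (t + d) - v t
          = c * (∫ s in (0:ℝ)..d, (t + d - s) ^ (γ - 1) * f (v s))
            + c * ((∫ s in (0:ℝ)..t, (t - s) ^ (γ - 1) * f (v (s + d)))
              - ∫ s in (0:ℝ)..t, (t - s) ^ (γ - 1) * f (v s)) := by
        rw [h1, h2, hsplit, hshift]
        ring
      rw [hfactor] at hmono_int
      rw [hdiff_int] at hmono_int
      have h9 : c * ((∫ s in (0:ℝ)..t, (t - s) ^ (γ - 1) * f (v (s + d)))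
            - ∫ s in (0:ℝ)..t, (t - s) ^ (γ - 1) * f (v s))
          ≥ c * (-(L * ∫ s in (0:ℝ)..t, (t - s) ^ (γ - 1) * u s)) :=
        mul_le_mul_of_nonneg_left hmono_int hc.le
      have h10 : 0 ≤ c * ∫ s in (0:ℝ)..d, (t + d - s) ^ (γ - 1) * f (v s) :=
        mul_nonneg hc.le hAnn
      have hCc : C * ∫ s in (0:ℝ)..t, (t - s) ^ (γ - 1) * u s
          = c * (L * ∫ s in (0:ℝ)..t, (t - s) ^ (γ - 1) * u s) := by
        rw [hCdef]; ring
      rw [hCc]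
      nlinarith [h9, h10, hcomb]
    exact max_le hmain (mul_nonneg hC.le hInn)
  have hu0 := gronwall γ hγ0 C t₁ hC u hucont hunn hkey t₁ ⟨ht₁0, le_rfl⟩
  have h11 : v t₁ - v (t₁ + d) ≤ u t₁ := le_max_left _ _
  rw [hu0] at h11
  have h12' : t₁ + d = t₂ := by simp only [hddef]; ring
  rw [h12'] at h11
  linarith
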